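/- With the convergents h'_{-n} = A'_{-n}/B'_{-n} of the continued fraction H' = c_0/(1 - a_{-1}/(1 - c_{-1}/(1 - a_{-2}/(1 - ⋯)))), under the assumption 0 < A'_{-n} < B'_{-n} for all n ≥ 1 and a_{-n}, c_{-n} > 0, the sequence (h'_{-n})_{n≥0} satisfies 0 = h'_0 < h'_{-1} < h'_{-2} < ⋯ < 1; in particular it is strictly increasing and bounded above by 1, hence convergent. -/
import Mathlib


open Filter Topology

/-- the convergents `h'_{-n} = A'_{-n}/B'_{-n}` of the continued fraction `H'`
form a strictly increasing sequence starting at `0`, bounded above by `1`, hence convergent. -/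
theorem stmt4
    (aNeg cNeg : ℕ → ℝ)
    (haNeg : ∀ n : ℕ, 0 < aNeg n ∧ aNeg n < 1)
    (hcNeg : ∀ n : ℕ, 0 < cNeg n ∧ cNeg n < 1)
    (A B : ℤ → ℝ)
    (hA1 : A 1 = -1) (hA0 : A 0 = 0)
    (hB1 : B 1 = 0) (hB0 : B 0 = 1)
    (hAeven : ∀ n : ℕ, 1 ≤ n →
      A (-(2 * (n : ℤ))) = A (-(2 * (n : ℤ)) + 1) - aNeg n * A (-(2 * (n : ℤ)) + 2))
    (hAodd : ∀ n : ℕ,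
      A (-(2 * (n : ℤ)) - 1) = A (-(2 * (n : ℤ))) - cNeg n * A (-(2 * (n : ℤ)) + 1))
    (hBeven : ∀ n : ℕ, 1 ≤ n →
      B (-(2 * (n : ℤ))) = B (-(2 * (n : ℤ)) + 1) - aNeg n * B (-(2 * (n : ℤ)) + 2))
    (hBodd : ∀ n : ℕ,
      B (-(2 * (n : ℤ)) - 1) = B (-(2 * (n : ℤ))) - cNeg n * B (-(2 * (n : ℤ)) + 1))
    (hAB : ∀ n : ℕ, 1 ≤ n → 0 < A (-(n : ℤ)) ∧ A (-(n : ℤ)) < B (-(n : ℤ))) :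
    A 0 / B 0 = 0 ∧
    StrictMono (fun n : ℕ => A (-(n : ℤ)) / B (-(n : ℤ))) ∧
    (∀ n : ℕ, A (-(n : ℤ)) / B (-(n : ℤ)) < 1) ∧
    ∃ H' : ℝ, Tendsto (fun n : ℕ => A (-(n : ℤ)) / B (-(n : ℤ))) atTop (𝓝 H') := by
  have hBpos : ∀ n : ℕ, 0 < B (-(n : ℤ)) := by
    intro n
    rcases Nat.eq_zero_or_pos n with h | h
    · subst h; norm_num [hB0]
    · exact lt_trans (hAB n h).1 (hAB n h).2
  set E : ℕ → ℝ := fun n => A (-(n : ℤ) - 1) * B (-(n : ℤ)) - A (-(n : ℤ)) * B (-(n : ℤ) - 1)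
    with hE
  -- base value
  have hE0 : E 0 = cNeg 0 := by
    have h1 := hAodd 0
    have h2 := hBodd 0
    norm_num at h1 h2
    simp only [hE]
    norm_num
    rw [h1, h2, hA0, hB0, hA1, hB1]
    ring
  have step1 : ∀ k : ℕ, E (2 * k + 1) = aNeg (k + 1) * E (2 * k) := by
    intro k
    have e1 : (-(((2 * k + 1 : ℕ)) : ℤ) - 1) = -(2 * ((k + 1 : ℕ) : ℤ)) := by push_cast; ring
    have e2 : (-(((2 * k + 1 : ℕ)) : ℤ)) = -(2 * ((k + 1 : ℕ) : ℤ)) + 1 := by push_cast; ring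
    have e3 : (-(((2 * k : ℕ)) : ℤ)) = -(2 * ((k + 1 : ℕ) : ℤ)) + 2 := by push_cast; ring
    have e4 : (-(((2 * k : ℕ)) : ℤ) - 1) = -(2 * ((k + 1 : ℕ) : ℤ)) + 1 := by push_cast; ring
    have h1 := hAeven (k + 1) (by omega)
    have h2 := hBeven (k + 1) (by omega)
    simp only [hE]
    rw [e1, e4, e2, e3, h1, h2]
    ring
  have step2 : ∀ k : ℕ, E (2 * k + 2) = cNeg (k + 1) * E (2 * k + 1) := by
    intro k
    have e1 : (-(((2 * k + 2 : ℕ)) : ℤ) - 1) = -(2 * ((k + 1 : ℕ) : ℤ)) - 1 := by push_cast; ring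
    have e2 : (-(((2 * k + 2 : ℕ)) : ℤ)) = -(2 * ((k + 1 : ℕ) : ℤ)) := by push_cast; ring
    have e3 : (-(((2 * k + 1 : ℕ)) : ℤ)) = -(2 * ((k + 1 : ℕ) : ℤ)) + 1 := by push_cast; ring
    have e4 : (-(((2 * k + 1 : ℕ)) : ℤ) - 1) = -(2 * ((k + 1 : ℕ) : ℤ)) := by push_cast; ring
    have h1 := hAodd (k + 1)
    have h2 := hBodd (k + 1)
    simp only [hE]
    rw [e1, e4, e2, e3, h1, h2]
    ring
  have key : ∀ k : ℕ, 0 < E (2 * k) ∧ 0 < E (2 * k + 1) := by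
    intro k
    induction k with
    | zero =>
      have h0 : 0 < E 0 := by rw [hE0]; exact (hcNeg 0).1
      refine ⟨by simpa using h0, ?_⟩
      have := step1 0
      norm_num at this ⊢
      rw [this]
      exact mul_pos (haNeg 1).1 h0
    | succ k ih =>
      have e22 : 2 * (k + 1) = 2 * k + 2 := by ring
      have h2 : 0 < E (2 * k + 2) := by
        rw [step2 k]; exact mul_pos (hcNeg (k + 1)).1 ih.2
      constructor
      · rw [e22]; exact h2
      · rw [e22, show 2 * k + 2 + 1 = 2 * (k + 1) + 1 from by ring, step1 (k + 1),
          show 2 * (k + 1) = 2 * k + 2 from by ring]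
        exact mul_pos (haNeg (k + 2)).1 h2
  have hEpos : ∀ n : ℕ, 0 < E n := by
    intro n
    rcases Nat.even_or_odd n with ⟨k, hk⟩ | ⟨k, hk⟩
    · have := (key k).1; rwa [show 2 * k = n from by omega] at this
    · have := (key k).2; rwa [show 2 * k + 1 = n from by omega] at this
  have hlt : ∀ n : ℕ, A (-(n : ℤ)) / B (-(n : ℤ)) < A (-((n + 1 : ℕ) : ℤ)) / B (-((n + 1 : ℕ) : ℤ)) := by
    intro n
    rw [div_lt_div_iff₀ (hBpos n) (hBpos (n + 1))]
    have e : (-(((n + 1 : ℕ)) : ℤ)) = -(n : ℤ) - 1 := by push_cast; ring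
    have := hEpos n
    simp only [hE] at this
    rw [e]
    nlinarith [this]
  have hmono : StrictMono (fun n : ℕ => A (-(n : ℤ)) / B (-(n : ℤ))) :=
    strictMono_nat_of_lt_succ hlt
  have hlt1 : ∀ n : ℕ, A (-(n : ℤ)) / B (-(n : ℤ)) < 1 := by
    intro n
    rcases Nat.eq_zero_or_pos n with h | h
    · subst h; simp [hA0, hB0]
    · rw [div_lt_one (hBpos n)]; exact (hAB n h).2
  refine ⟨by simp [hA0, hB0], hmono, hlt1, ?_⟩
  refine ⟨_, tendsto_atTop_ciSup hmono.monotone ⟨1, ?_⟩⟩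
  rintro x ⟨n, rfl⟩
  exact (hlt1 n).le
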